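/- Let I ⊆ {1,…,N} with |I| = k, let δ ∈ (0,1), and set s = 8·log(2N/ε). Suppose Φ_I^T Φ_I is invertible with ‖(Φ_I^T Φ_I)^{−1}‖ ≤ 1/(1−δ), and that ‖Φ_I^T φ_i‖₂² ≤ (1−δ)²/s for all i ∈ I^c. Then every h ∈ ℝ^N with Φh = 0 satisfies ‖h_I‖₂ ≤ s^{−1/2} · ‖h_{I^c}‖₁. -/

import Mathlib

open Finset Matrix

open scoped Classical

noncomputable section

/-- The ℓ₂→ℓ₂ operator (spectral) norm of a real matrix. -/
def specNorm {α β : Type*} [Fintype α] [Fintype β] (A : Matrix α β ℝ) : ℝ :=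
  sSup {t : ℝ | ∃ x : β → ℝ, (∑ j, x j ^ 2) ≤ 1 ∧ t = Real.sqrt (∑ i, (∑ j, A i j * x j) ^ 2)}

variable {m N : ℕ}

/-- The submatrix of `Φ` formed by the columns indexed by `I`. -/
def colSub (Φ : Matrix (Fin m) (Fin N) ℝ) (I : Finset (Fin N)) :
    Matrix (Fin m) {i // i ∈ I} ℝ :=
  Matrix.of fun r j => Φ r (j : Fin N)

/-- The Gram matrix `Φ_Iᵀ Φ_I`. -/
def gram (Φ : Matrix (Fin m) (Fin N) ℝ) (I : Finset (Fin N)) :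
    Matrix {i // i ∈ I} {i // i ∈ I} ℝ :=
  (colSub Φ I)ᵀ * colSub Φ I

/-- `‖Φ_Iᵀ φ_i‖₂²`. -/
def sincSq (Φ : Matrix (Fin m) (Fin N) ℝ) (I : Finset (Fin N)) (i : Fin N) : ℝ :=
  ∑ j ∈ I, (∑ r, Φ r j * Φ r i) ^ 2

/-- All columns of `Φ` have unit ℓ₂ norm. -/
def unitCols (Φ : Matrix (Fin m) (Fin N) ℝ) : Prop :=
  ∀ j, (∑ r, Φ r j ^ 2) = 1

/-- `Φ` is `(k,δ,ε)`-StRIP: a uniformly random `k`-subset `I` satisfies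
`‖Φ_Iᵀ Φ_I − Id‖ ≤ δ` with probability at least `1 − ε`. -/
def StRIP (Φ : Matrix (Fin m) (Fin N) ℝ) (k : ℕ) (δ ε : ℝ) : Prop :=
  (1 - ε) * ((Finset.powersetCard k (univ : Finset (Fin N))).card : ℝ) ≤
    (((Finset.powersetCard k (univ : Finset (Fin N))).filter
        fun I => specNorm (gram Φ I - 1) ≤ δ).card : ℝ)

/-- `Φ` is `(k,α,ε)`-SINC: a uniformly random `k`-subset `I` satisfies
`max_{i ∉ I} ‖Φ_Iᵀ φ_i‖₂² ≤ α` with probability at least `1 − ε`. -/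
def SINC (Φ : Matrix (Fin m) (Fin N) ℝ) (k : ℕ) (α ε : ℝ) : Prop :=
  (1 - ε) * ((Finset.powersetCard k (univ : Finset (Fin N))).card : ℝ) ≤
    (((Finset.powersetCard k (univ : Finset (Fin N))).filter
        fun I => ∀ i ∉ I, sincSq Φ I i ≤ α).card : ℝ)

/-- ℓ₁ norm on `ℝ^N`. -/
def l1 (x : Fin N → ℝ) : ℝ := ∑ i, |x i|

/-- ℓ₂ norm on `ℝ^N`. -/
def l2 (x : Fin N → ℝ) : ℝ := Real.sqrt (∑ i, x i ^ 2)

/-- Restriction `x_I` of a vector to the coordinates in `I` (zero outside `I`). -/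
def restr (I : Finset (Fin N)) (x : Fin N → ℝ) : Fin N → ℝ :=
  fun i => if i ∈ I then x i else 0

/-- `x` is `k`-sparse. -/
def kSparse (k : ℕ) (x : Fin N → ℝ) : Prop :=
  ((univ : Finset (Fin N)).filter fun i => x i ≠ 0).card ≤ k

/-- `min_{x' k-sparse} ‖x − x′‖₁`. -/
def bestK (k : ℕ) (x : Fin N → ℝ) : ℝ :=
  sInf {t : ℝ | ∃ x' : Fin N → ℝ, kSparse k x' ∧ t = l1 (x - x')}

/-- `xh` is a (noiseless) Basis Pursuit solution for the data `y`. -/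
def isBPsol (Φ : Matrix (Fin m) (Fin N) ℝ) (y : Fin m → ℝ) (xh : Fin N → ℝ) : Prop :=
  Φ.mulVec xh = y ∧ ∀ u : Fin N → ℝ, Φ.mulVec u = y → l1 xh ≤ l1 u

lemma specNorm_bound {α β : Type*} [Fintype α] [Fintype β] (A : Matrix α β ℝ) (x : β → ℝ) :
    Real.sqrt (∑ i, (∑ j, A i j * x j) ^ 2) ≤ specNorm A * Real.sqrt (∑ j, x j ^ 2) := by
  have hbdd : BddAbove {t : ℝ | ∃ x : β → ℝ, (∑ j, x j ^ 2) ≤ 1 ∧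
      t = Real.sqrt (∑ i, (∑ j, A i j * x j) ^ 2)} := by
    refine ⟨Real.sqrt (∑ i, ∑ j, A i j ^ 2), ?_⟩
    rintro t ⟨y, hy, rfl⟩
    apply Real.sqrt_le_sqrt
    apply Finset.sum_le_sum
    intro i _
    calc (∑ j, A i j * y j) ^ 2 ≤ (∑ j, A i j ^ 2) * ∑ j, y j ^ 2 :=
          Finset.sum_mul_sq_le_sq_mul_sq _ _ _
      _ ≤ (∑ j, A i j ^ 2) * 1 := by
          refine mul_le_mul_of_nonneg_left hy ?_
          exact Finset.sum_nonneg fun j _ => sq_nonneg _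
      _ = ∑ j, A i j ^ 2 := mul_one _
  set c := Real.sqrt (∑ j, x j ^ 2) with hc
  have hsum0 : (0:ℝ) ≤ ∑ j, x j ^ 2 := Finset.sum_nonneg fun j _ => sq_nonneg _
  rcases eq_or_lt_of_le (Real.sqrt_nonneg (∑ j, x j ^ 2)) with h0 | hpos
  · -- c = 0, so x = 0
    have hx0 : ∀ j, x j = 0 := by
      have : (∑ j, x j ^ 2) = 0 := by
        have := Real.sqrt_eq_zero hsum0 |>.mp h0.symm
        exact this
      intro j
      have := (Finset.sum_eq_zero_iff_of_nonneg (fun j _ => sq_nonneg (x j))).mp this j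
        (Finset.mem_univ j)
      exact pow_eq_zero_iff (n := 2) (by norm_num) |>.mp this
    have : (∑ i, (∑ j, A i j * x j) ^ 2) = 0 := by
      apply Finset.sum_eq_zero; intro i _
      have : (∑ j, A i j * x j) = 0 := by
        apply Finset.sum_eq_zero; intro j _; rw [hx0 j, mul_zero]
      rw [this]; ring
    rw [this, Real.sqrt_zero, hc, ← h0, mul_zero]
  · -- c > 0
    have hc2 : c ^ 2 = ∑ j, x j ^ 2 := Real.sq_sqrt hsum0
    set y : β → ℝ := fun j => x j / c with hy
    have hy1 : (∑ j, y j ^ 2) = 1 := by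
      simp only [hy, div_pow, ← Finset.sum_div, ← hc2]
      field_simp
      exact div_self (ne_of_gt hpos)
    have hmem : Real.sqrt (∑ i, (∑ j, A i j * y j) ^ 2) ∈ {t : ℝ | ∃ x : β → ℝ,
        (∑ j, x j ^ 2) ≤ 1 ∧ t = Real.sqrt (∑ i, (∑ j, A i j * x j) ^ 2)} :=
      ⟨y, le_of_eq hy1, rfl⟩
    have hle : Real.sqrt (∑ i, (∑ j, A i j * y j) ^ 2) ≤ specNorm A := le_csSup hbdd hmem
    have hxy : ∀ j, x j = c * y j := by
      intro j; simp only [hy]; field_simp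
      exact (mul_div_cancel_right₀ _ (ne_of_gt hpos)).symm
    have key : Real.sqrt (∑ i, (∑ j, A i j * x j) ^ 2)
        = c * Real.sqrt (∑ i, (∑ j, A i j * y j) ^ 2) := by
      have : (∑ i, (∑ j, A i j * x j) ^ 2) = c ^ 2 * ∑ i, (∑ j, A i j * y j) ^ 2 := by
        rw [Finset.mul_sum]
        apply Finset.sum_congr rfl
        intro i _
        have : (∑ j, A i j * x j) = c * ∑ j, A i j * y j := by
          rw [Finset.mul_sum]
          apply Finset.sum_congr rfl
          intro j _; rw [hxy j]; ring
        rw [this]; ring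
      rw [this, Real.sqrt_mul (sq_nonneg c), Real.sqrt_sq hpos.le]
    rw [key, mul_comm]
    exact mul_le_mul_of_nonneg_right hle hpos.le

lemma l2sum_sum_le {α ι : Type*} [Fintype α] (s : Finset ι) (f : ι → α → ℝ) :
    Real.sqrt (∑ j, (∑ i ∈ s, f i j) ^ 2) ≤ ∑ i ∈ s, Real.sqrt (∑ j, f i j ^ 2) := by
  set F : ι → EuclideanSpace ℝ α := fun i => (WithLp.equiv 2 (α → ℝ)).symm (f i) with hF
  have h1 : Real.sqrt (∑ j, (∑ i ∈ s, f i j) ^ 2) = ‖∑ i ∈ s, F i‖ := by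
    rw [EuclideanSpace.norm_eq]
    simp only [Real.norm_eq_abs, sq_abs]
    congr 1
    apply Finset.sum_congr rfl
    intro j _
    congr 1
    simp only [hF, WithLp.equiv, Equiv.refl_apply]
    simp
  have h2 : ∀ i, ‖F i‖ = Real.sqrt (∑ j, f i j ^ 2) := by
    intro i; rw [EuclideanSpace.norm_eq]
    simp only [Real.norm_eq_abs, sq_abs]
    rfl
  rw [h1]
  calc ‖∑ i ∈ s, F i‖ ≤ ∑ i ∈ s, ‖F i‖ := norm_sum_le _ _
    _ = ∑ i ∈ s, Real.sqrt (∑ j, f i j ^ 2) := Finset.sum_congr rfl fun i _ => h2 i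

/-- Lemma: bound on the on-support recovery error. -/
theorem stmt1 (m N k : ℕ) (δ ε : ℝ) (hδ0 : 0 < δ) (hδ1 : δ < 1) (hε0 : 0 < ε) (hε1 : ε < 1)
    (Φ : Matrix (Fin m) (Fin N) ℝ) (hcols : unitCols Φ)
    (I : Finset (Fin N)) (hI : I.card = k)
    (hunit : IsUnit (gram Φ I))
    (hinv : specNorm (gram Φ I)⁻¹ ≤ 1 / (1 - δ))
    (hsinc : ∀ i ∉ I, sincSq Φ I i ≤ (1 - δ) ^ 2 / (8 * Real.log (2 * N / ε)))
    (h : Fin N → ℝ) (hker : Φ.mulVec h = 0) :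
    l2 (restr I h) ≤ (Real.sqrt (8 * Real.log (2 * N / ε)))⁻¹ * l1 (restr Iᶜ h) := by
  
  classical
  set s : ℝ := 8 * Real.log (2 * N / ε) with hs
  have h1δ : (0:ℝ) < 1 - δ := by linarith
  set v : {i // i ∈ I} → ℝ := fun j => h j with hv
  set w : {i // i ∈ I} → ℝ := fun j => ∑ i ∈ Iᶜ, (∑ r, Φ r (j:Fin N) * Φ r i) * h i with hw
  have hgram : ∀ j j' : {i // i ∈ I}, gram Φ I j j' = ∑ r, Φ r (j:Fin N) * Φ r (j':Fin N) := by
    intro j j'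
    simp [_root_.gram, colSub, Matrix.mul_apply, Matrix.transpose_apply]
  have hker' : ∀ r, (∑ i, Φ r i * h i) = 0 := by
    intro r
    have := congrFun hker r
    simpa [Matrix.mulVec, dotProduct] using this
  have hvw : (gram Φ I).mulVec v = -w := by
    funext j
    have htot : ∑ i, (∑ r, Φ r (j:Fin N) * Φ r i) * h i = 0 := by
      calc ∑ i, (∑ r, Φ r (j:Fin N) * Φ r i) * h i
          = ∑ i, ∑ r, Φ r (j:Fin N) * (Φ r i * h i) := by
            refine Finset.sum_congr rfl fun i _ => ?_
            rw [Finset.sum_mul]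
            exact Finset.sum_congr rfl fun r _ => by ring
        _ = ∑ r, ∑ i, Φ r (j:Fin N) * (Φ r i * h i) := Finset.sum_comm
        _ = ∑ r, Φ r (j:Fin N) * ∑ i, Φ r i * h i := by
            exact Finset.sum_congr rfl fun r _ => (Finset.mul_sum _ _ _).symm
        _ = 0 := by simp [hker']
    have hsplit := Finset.sum_add_sum_compl I (fun i => (∑ r, Φ r (j:Fin N) * Φ r i) * h i)
    have hmv : ((gram Φ I).mulVec v) j = ∑ i ∈ I, (∑ r, Φ r (j:Fin N) * Φ r i) * h i := by
      show ∑ j' : {i // i ∈ I}, gram Φ I j j' * v j'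
          = ∑ i ∈ I, (∑ r, Φ r (j:Fin N) * Φ r i) * h i
      rw [← Finset.sum_coe_sort I (fun i => (∑ r, Φ r (j:Fin N) * Φ r i) * h i)]
      exact Finset.sum_congr rfl fun j' _ => by rw [hgram]
    have hwj : w j = ∑ i ∈ Iᶜ, (∑ r, Φ r (j:Fin N) * Φ r i) * h i := rfl
    have : ((gram Φ I).mulVec v) j + w j = 0 := by
      rw [hmv, hwj]
      linarith [hsplit, htot]
    have h2 : (-w) j = -(w j) := rfl
    rw [h2]
    linarith
  have hdet : IsUnit (gram Φ I).det := (Matrix.isUnit_iff_isUnit_det _).mp hunit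
  have hvinv : v = -((gram Φ I)⁻¹.mulVec w) := by
    have h3 := congrArg (fun u => (gram Φ I)⁻¹.mulVec u) hvw
    simpa [Matrix.mulVec_mulVec, Matrix.nonsing_inv_mul _ hdet, Matrix.mulVec_neg,
      Matrix.one_mulVec] using h3
  set L : ℝ := l1 (restr Iᶜ h) with hL
  have hLsum : L = ∑ i ∈ Iᶜ, |h i| := by
    rw [hL, l1]
    rw [show (fun i => |restr Iᶜ h i|) = fun i => if i ∈ Iᶜ then |h i| else 0 by
      funext i; by_cases hi : i ∈ Iᶜ <;> simp [restr, hi]]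
    rw [Finset.sum_ite_mem, Finset.univ_inter]
  have hLnn : 0 ≤ L := by
    rw [hLsum]; exact Finset.sum_nonneg fun i _ => abs_nonneg _
  have hl2 : l2 (restr I h) = Real.sqrt (∑ j : {i // i ∈ I}, ((gram Φ I)⁻¹.mulVec w j) ^ 2) := by
    rw [l2]
    congr 1
    have e1 : ∑ i, (restr I h i) ^ 2 = ∑ i ∈ I, h i ^ 2 := by
      rw [show (fun i => (restr I h i) ^ 2) = fun i => if i ∈ I then h i ^ 2 else 0 by
        funext i; by_cases hi : i ∈ I <;> simp [restr, hi]]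
      rw [Finset.sum_ite_mem, Finset.univ_inter]
    rw [e1, ← Finset.sum_coe_sort I (fun i => h i ^ 2)]
    refine Finset.sum_congr rfl fun j _ => ?_
    have : h (j : Fin N) = v j := rfl
    rw [this, hvinv]
    simp
  have step1 : Real.sqrt (∑ j : {i // i ∈ I}, ((gram Φ I)⁻¹.mulVec w j) ^ 2)
      ≤ specNorm (gram Φ I)⁻¹ * Real.sqrt (∑ j : {i // i ∈ I}, w j ^ 2) := by
    have := specNorm_bound (gram Φ I)⁻¹ w
    simpa [Matrix.mulVec, dotProduct] using this
  have step2 : Real.sqrt (∑ j : {i // i ∈ I}, w j ^ 2)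
      ≤ ∑ i ∈ Iᶜ, |h i| * Real.sqrt (sincSq Φ I i) := by
    have htri := l2sum_sum_le (α := {i // i ∈ I}) Iᶜ
      (fun i j => (∑ r, Φ r (j:Fin N) * Φ r i) * h i)
    refine le_trans htri (le_of_eq (Finset.sum_congr rfl fun i _ => ?_))
    have e2 : ∑ j : {x // x ∈ I}, ((∑ r, Φ r (j:Fin N) * Φ r i) * h i) ^ 2
        = h i ^ 2 * sincSq Φ I i := by
      rw [sincSq, ← Finset.sum_coe_sort I (fun x => (∑ r, Φ r x * Φ r i) ^ 2),
        Finset.mul_sum]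
      exact Finset.sum_congr rfl fun j _ => by ring
    rw [e2, Real.sqrt_mul (sq_nonneg _), Real.sqrt_sq_eq_abs]
  have step3 : ∑ i ∈ Iᶜ, |h i| * Real.sqrt (sincSq Φ I i) ≤ (1 - δ) / Real.sqrt s * L := by
    have hbound : ∀ i ∈ Iᶜ, |h i| * Real.sqrt (sincSq Φ I i) ≤ |h i| * ((1 - δ) / Real.sqrt s) := by
      intro i hi
      refine mul_le_mul_of_nonneg_left ?_ (abs_nonneg _)
      have hiI : i ∉ I := Finset.mem_compl.mp hi
      have := Real.sqrt_le_sqrt (hsinc i hiI)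
      refine le_trans this (le_of_eq ?_)
      rw [Real.sqrt_div (sq_nonneg _), Real.sqrt_sq h1δ.le]
    calc ∑ i ∈ Iᶜ, |h i| * Real.sqrt (sincSq Φ I i)
        ≤ ∑ i ∈ Iᶜ, |h i| * ((1 - δ) / Real.sqrt s) := Finset.sum_le_sum hbound
      _ = (1 - δ) / Real.sqrt s * L := by
          rw [hLsum, Finset.mul_sum]
          exact Finset.sum_congr rfl fun i _ => mul_comm _ _
  have chain : l2 (restr I h) ≤ 1 / (1 - δ) * ((1 - δ) / Real.sqrt s * L) := by
    rw [hl2]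
    refine le_trans step1 ?_
    have hb : (0:ℝ) ≤ Real.sqrt (∑ j : {i // i ∈ I}, w j ^ 2) := Real.sqrt_nonneg _
    calc specNorm (gram Φ I)⁻¹ * Real.sqrt (∑ j : {i // i ∈ I}, w j ^ 2)
        ≤ 1 / (1 - δ) * Real.sqrt (∑ j : {i // i ∈ I}, w j ^ 2) :=
          mul_le_mul_of_nonneg_right hinv hb
      _ ≤ 1 / (1 - δ) * ((1 - δ) / Real.sqrt s * L) := by
          refine mul_le_mul_of_nonneg_left (le_trans step2 step3) ?_
          positivity
  refine le_trans chain (le_of_eq ?_)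
  have h1δ' : (1 - δ) ≠ 0 := ne_of_gt h1δ
  rw [show (1:ℝ) / (1 - δ) * ((1 - δ) / Real.sqrt s * L)
      = (1 - δ) * (1 - δ)⁻¹ * ((Real.sqrt s)⁻¹ * L) by ring]
  rw [mul_inv_cancel₀ h1δ', one_mul]
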